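/- arXiv:1310.3097 — 10 statements merged into one kernel-verified Lean document; each statement's English description precedes it below -/
import Mathlib

section
/- Let (X,d) be a complete bounded metric space, m, n ∈ ℕ, and let f_1, ..., f_n : X^m → X be generalized φ-contractions for a common comparison function φ. Define F : 𝒦(X)^m → 𝒦(X) by F(D_1,...,D_m) = ⋃_{i=1}^n f_i(D_1 × ... × D_m), where 𝒦(X) is the space of nonempty compact subsets with the Hausdorff metric. Then there exists a unique A ∈ 𝒦(X) with F(A,...,A) = A. -/
open Filter Topology NNReal ENNReal

section BoydWong

variable (φ : ℝ≥0 → ℝ≥0)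

private lemma phi_zero (hmono : Monotone φ) (hlt : ∀ t : ℝ≥0, 0 < t → φ t < t) : φ 0 = 0 := by
  by_contra h
  have h0 : 0 < φ 0 := pos_iff_ne_zero.2 h
  exact absurd ((hmono (zero_le : (0:ℝ≥0) ≤ φ 0)).trans_lt (hlt _ h0)) (lt_irrefl _)

private lemma phi_le (hmono : Monotone φ) (hlt : ∀ t : ℝ≥0, 0 < t → φ t < t) :
    ∀ t, φ t ≤ t := by
  intro t
  rcases eq_or_lt_of_le (zero_le : (0:ℝ≥0) ≤ t) with h | h
  · rw [← h, phi_zero φ hmono hlt]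
  · exact (hlt t h).le

private lemma phi_iterate_tendsto (hmono : Monotone φ) (husc : UpperSemicontinuous φ)
    (hlt : ∀ t : ℝ≥0, 0 < t → φ t < t) (t : ℝ≥0) :
    Tendsto (fun k => φ^[k] t) atTop (𝓝 0) := by
  have hle := phi_le φ hmono hlt
  have hanti : Antitone fun k => φ^[k] t := by
    apply antitone_nat_of_succ_le
    intro k
    rw [Function.iterate_succ_apply']
    exact hle _
  have htend : Tendsto (fun k => φ^[k] t) atTop (𝓝 (⨅ k, φ^[k] t)) :=
    tendsto_atTop_ciInf hanti (OrderBot.bddBelow _)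
  set L : ℝ≥0 := ⨅ k, φ^[k] t with hL
  rcases eq_or_lt_of_le (zero_le : (0:ℝ≥0) ≤ L) with h0 | h0
  · rwa [← h0] at htend
  · exfalso
    have hφL : φ L < L := hlt L h0
    have hev : ∀ᶠ s in 𝓝 L, φ s < L := husc L L hφL
    have : ∀ᶠ k in atTop, φ (φ^[k] t) < L := htend.eventually hev
    rcases this.exists with ⟨k, hk⟩
    have hk' : φ^[k + 1] t < L := by rw [Function.iterate_succ_apply']; exact hk
    exact absurd (ciInf_le (OrderBot.bddBelow _) (k + 1)) (not_le.2 hk')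

/-- Boyd–Wong fixed point theorem (comparison function version). -/
private theorem boyd_wong {Y : Type*} [MetricSpace Y] [CompleteSpace Y] [Nonempty Y]
    (hmono : Monotone φ) (husc : UpperSemicontinuous φ)
    (hlt : ∀ t : ℝ≥0, 0 < t → φ t < t)
    (F : Y → Y) (hF : ∀ x y, nndist (F x) (F y) ≤ φ (nndist x y)) :
    ∃! z : Y, F z = z := by
  have hle := phi_le φ hmono hlt
  obtain ⟨x0⟩ := ‹Nonempty Y›
  set x : ℕ → Y := fun k => F^[k] x0 with hx
  have hxsucc : ∀ k, x (k + 1) = F (x k) := fun k => Function.iterate_succ_apply' F k x0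
  -- distances between consecutive terms
  have hd : ∀ k, nndist (x k) (x (k + 1)) ≤ φ^[k] (nndist (x 0) (x 1)) := by
    intro k
    induction k with
    | zero => simp
    | succ k ih =>
      rw [hxsucc k, hxsucc (k + 1), Function.iterate_succ_apply']
      exact (hF _ _).trans (hmono ih)
  have hd0 : Tendsto (fun k => nndist (x k) (x (k + 1))) atTop (𝓝 0) := by
    have := phi_iterate_tendsto φ hmono husc hlt (nndist (x 0) (x 1))
    exact tendsto_of_tendsto_of_tendsto_of_le_of_le tendsto_const_nhds this
      (fun k => zero_le) hd
  -- key Cauchy estimate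
  have key : ∀ ε : ℝ≥0, 0 < ε → ∃ N, ∀ p : ℕ, nndist (x (N + p)) (x N) ≤ ε := by
    intro ε hε
    have hδ : 0 < ε - φ ε := tsub_pos_of_lt (hlt ε hε)
    obtain ⟨N, hN⟩ := (hd0.eventually_lt_const hδ).exists
    refine ⟨N, fun p => ?_⟩
    induction p with
    | zero => simp
    | succ p ih =>
      have h1 : nndist (x (N + p + 1)) (x (N + 1)) ≤ φ ε := by
        rw [hxsucc (N + p), hxsucc N]
        exact (hF _ _).trans (hmono ih)
      calc nndist (x (N + (p + 1))) (x N)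
          ≤ nndist (x (N + p + 1)) (x (N + 1)) + nndist (x (N + 1)) (x N) := by
            rw [show N + (p + 1) = N + p + 1 from rfl]; exact nndist_triangle _ _ _
        _ ≤ φ ε + (ε - φ ε) := add_le_add h1 ((nndist_comm _ _).le.trans hN.le)
        _ = ε := by rw [add_tsub_cancel_of_le (hle ε)]
  -- Cauchy sequence
  have hcauchy : CauchySeq x := by
    rw [Metric.cauchySeq_iff']
    intro ε hε
    have htp : 0 < ε.toNNReal := Real.toNNReal_pos.2 hε
    have hε2 : (0 : ℝ≥0) < ε.toNNReal / 2 := by positivity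
    obtain ⟨N, hN⟩ := key _ hε2
    refine ⟨N, fun n hn => ?_⟩
    obtain ⟨p, rfl⟩ := Nat.exists_eq_add_of_le hn
    have := hN p
    have hcoe : dist (x (N + p)) (x N) ≤ (ε.toNNReal / 2 : ℝ≥0) := by
      rw [dist_nndist]; exact_mod_cast this
    calc dist (x (N + p)) (x N) ≤ (ε.toNNReal / 2 : ℝ≥0) := hcoe
      _ = ε / 2 := by rw [NNReal.coe_div, Real.coe_toNNReal _ hε.le]; norm_num
      _ < ε := by linarith
  obtain ⟨z, hz⟩ := cauchySeq_tendsto_of_complete hcauchy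
  -- F is continuous (nonexpansive)
  have hFlip : LipschitzWith 1 F := by
    apply LipschitzWith.of_dist_le_mul
    intro a b
    rw [NNReal.coe_one, one_mul, dist_nndist, dist_nndist]
    exact_mod_cast (hF a b).trans (hle _)
  have hfix : F z = z := by
    have h1 : Tendsto (fun k => x (k + 1)) atTop (𝓝 z) := hz.comp (tendsto_add_atTop_nat 1)
    have h2 : Tendsto (fun k => F (x k)) atTop (𝓝 (F z)) :=
      (hFlip.continuous.tendsto z).comp hz
    have : (fun k => x (k + 1)) = fun k => F (x k) := funext hxsucc
    rw [this] at h1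
    exact tendsto_nhds_unique h2 h1
  refine ⟨z, hfix, fun w hw => ?_⟩
  by_contra hne
  have hpos : 0 < nndist w z := pos_iff_ne_zero.2 fun h => hne (nndist_eq_zero.1 h)
  have : nndist w z ≤ φ (nndist w z) := by
    conv_lhs => rw [← hw, ← hfix]
    exact hF w z
  exact absurd (this.trans_lt (hlt _ hpos)) (lt_irrefl _)

end BoydWong

/-- A GIFS `(f_1,…,f_n)` of order `m` on a complete bounded metric
space, consisting of generalized `φ`-contractions for a common comparison function `φ`,
has a unique set `A ∈ 𝒦(X)` (nonempty compact) with
`F(A,…,A) = ⋃ i, f_i(A × ⋯ × A) = A`. -/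
theorem gifs_attractor_exists_unique
    {X : Type*} [MetricSpace X] [CompleteSpace X] [Nonempty X]
    (hbdd : Bornology.IsBounded (Set.univ : Set X))
    {m n : ℕ} (hm : 0 < m) (hn : 0 < n)
    (φ : ℝ≥0 → ℝ≥0)
    (hmono : Monotone φ) (husc : UpperSemicontinuous φ)
    (hlt : ∀ t : ℝ≥0, 0 < t → φ t < t)
    (f : Fin n → (Fin m → X) → X)
    (hf : ∀ i, ∀ x y : Fin m → X, nndist (f i x) (f i y) ≤ φ (nndist x y)) :
    ∃! A : Set X, (A.Nonempty ∧ IsCompact A) ∧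
      (⋃ i, f i '' Set.univ.pi fun _ => A) = A := by
  classical
  have hle := phi_le φ hmono hlt
  haveI : Inhabited (Fin n) := ⟨⟨0, hn⟩⟩
  -- the maps are nonexpansive, hence continuous
  have hflip : ∀ i, LipschitzWith 1 (f i) := by
    intro i
    apply LipschitzWith.of_dist_le_mul
    intro a b
    rw [NNReal.coe_one, one_mul, dist_nndist, dist_nndist]
    exact_mod_cast (hf i a b).trans (hle _)
  -- the Hutchinson operator on nonempty compact sets
  set Fset : Set X → Set X := fun A => ⋃ i, f i '' Set.univ.pi fun _ => A with hFset
  have hcomp : ∀ A : TopologicalSpace.NonemptyCompacts X, IsCompact (Fset A) := by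
    intro A
    exact isCompact_iUnion fun i =>
      ((isCompact_univ_pi fun _ => A.isCompact).image (hflip i).continuous)
  have hne : ∀ A : TopologicalSpace.NonemptyCompacts X, (Fset A).Nonempty := by
    intro A
    obtain ⟨a, ha⟩ := A.nonempty
    exact ⟨f default (fun _ => a), Set.mem_iUnion.2 ⟨default,
      Set.mem_image_of_mem _ (fun j _ => ha)⟩⟩
  set F : TopologicalSpace.NonemptyCompacts X → TopologicalSpace.NonemptyCompacts X :=
    fun A => ⟨⟨Fset A, hcomp A⟩, hne A⟩ with hFdef
  -- key contraction estimate on the Hausdorff (e)distance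
  have hHalf : ∀ A B : TopologicalSpace.NonemptyCompacts X, ∀ u ∈ Fset (A : Set X),
      ∃ v ∈ Fset (B : Set X), edist u v ≤ (φ (nndist A B) : ℝ≥0∞) := by
    intro A B u hu
    obtain ⟨i, hui⟩ := Set.mem_iUnion.1 hu
    obtain ⟨a, ha, rfl⟩ := hui
    -- choose a closest point in B for each coordinate
    have hch : ∀ j : Fin m, ∃ b ∈ (B : Set X), nndist (a j) b ≤ nndist A B := by
      intro j
      obtain ⟨b, hbB, hb⟩ := B.isCompact.exists_infEdist_eq_edist B.nonempty (a j)
      refine ⟨b, hbB, ?_⟩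
      have h1 : edist (a j) b ≤ EMetric.hausdorffEdist (A : Set X) (B : Set X) := by
        rw [← hb]
        exact EMetric.infEdist_le_hausdorffEdist_of_mem (ha j (Set.mem_univ j))
      have h2 : EMetric.hausdorffEdist (A : Set X) (B : Set X) = (nndist A B : ℝ≥0∞) := by
        rw [← edist_nndist]; rfl
      rw [h2, edist_nndist] at h1
      exact_mod_cast h1
    choose b hbB hbd using hch
    refine ⟨f i b, Set.mem_iUnion.2 ⟨i, Set.mem_image_of_mem _ (fun j _ => hbB j)⟩, ?_⟩
    have hab : nndist a b ≤ nndist A B := nndist_pi_le_iff.2 hbd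
    have : nndist (f i a) (f i b) ≤ φ (nndist A B) := (hf i a b).trans (hmono hab)
    rw [edist_nndist]
    exact_mod_cast this
  have hFcontr : ∀ A B : TopologicalSpace.NonemptyCompacts X,
      nndist (F A) (F B) ≤ φ (nndist A B) := by
    intro A B
    have h1 : EMetric.hausdorffEdist (Fset (A : Set X)) (Fset (B : Set X))
        ≤ (φ (nndist A B) : ℝ≥0∞) := by
      apply EMetric.hausdorffEdist_le_of_mem_edist
      · exact hHalf A B
      · intro u hu
        obtain ⟨v, hv, huv⟩ := hHalf B A u hu
        rw [nndist_comm] at huv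
        exact ⟨v, hv, huv⟩
    have h2 : edist (F A) (F B) = EMetric.hausdorffEdist (Fset (A : Set X)) (Fset (B : Set X)) :=
      rfl
    rw [edist_nndist] at h2
    rw [← ENNReal.coe_le_coe, h2]
    exact h1
  -- apply the fixed point theorem
  haveI : Nonempty (TopologicalSpace.NonemptyCompacts X) :=
    ⟨⟨⟨{Classical.arbitrary X}, isCompact_singleton⟩, Set.singleton_nonempty _⟩⟩
  obtain ⟨Z, hZfix, hZuniq⟩ := boyd_wong φ hmono husc hlt F hFcontr
  refine ⟨(Z : Set X), ⟨⟨Z.nonempty, Z.isCompact⟩, ?_⟩, ?_⟩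
  · exact congrArg (fun W : TopologicalSpace.NonemptyCompacts X => (W : Set X)) hZfix
  · rintro A ⟨⟨hAne, hAcomp⟩, hAfix⟩
    set ZA : TopologicalSpace.NonemptyCompacts X := ⟨⟨A, hAcomp⟩, hAne⟩ with hZA
    have : F ZA = ZA := TopologicalSpace.NonemptyCompacts.ext hAfix
    have := hZuniq ZA this
    exact congrArg (fun W : TopologicalSpace.NonemptyCompacts X => (W : Set X)) this
end

section
/- Fix n, m ∈ ℕ with n, m ≥ 1. Define sets Ω_1 = {1,...,n} and Ω_{k+1} = (Ω_k)^m, and let Ω = Π_{i∈ℕ} Ω_i with the metric d(α,β) = Σ_{i∈ℕ} d_i(α^i, β^i)/(m+1)^i, where d_i is the discrete (0-1) metric on Ω_i. For j ∈ {1,...,n}, define τ_j : Ω^m → Ω by τ_j(α_1,...,α_m) = (j, (α_1^1,...,α_m^1), (α_1^2,...,α_m^2), ...). Then each τ_j is Lipschitz with constant at most m/(m+1) with respect to the maximum metric on Ω^m. -/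
open Filter Topology NNReal

/-- The levels of the code space: `Ω_1 = {1,…,n}`, `Ω_{k+1} = (Ω_k)^m`
(here indexed from `0`). -/
def OmegaL (n m : ℕ) : ℕ → Type
  | 0 => Fin n
  | k + 1 => Fin m → OmegaL n m k

/-- The code space `Ω = Π_k Ω_k`. -/
abbrev CodeSpace (n m : ℕ) : Type := ∀ k : ℕ, OmegaL n m k

instance OmegaL.decEq (n m : ℕ) : ∀ k, DecidableEq (OmegaL n m k)
  | 0 => inferInstanceAs (DecidableEq (Fin n))
  | k + 1 => letI := OmegaL.decEq n m k
             inferInstanceAs (DecidableEq (Fin m → OmegaL n m k))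

instance OmegaL.fintype (n m : ℕ) : ∀ k, Fintype (OmegaL n m k)
  | 0 => inferInstanceAs (Fintype (Fin n))
  | k + 1 => letI := OmegaL.fintype n m k
             inferInstanceAs (Fintype (Fin m → OmegaL n m k))

instance OmegaL.topologicalSpace (n m k : ℕ) : TopologicalSpace (OmegaL n m k) := ⊥

instance OmegaL.discreteTopology (n m k : ℕ) : DiscreteTopology (OmegaL n m k) := ⟨rfl⟩

/-- The metric `d(α,β) = Σ_k d_k(α^k,β^k)/(m+1)^{k+1}` on `Ω`,
where `d_k` is the 0-1 (discrete) metric on `Ω_k`. -/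
noncomputable def codeDist {n m : ℕ} (α β : CodeSpace n m) : ℝ :=
  ∑' k : ℕ, (if α k = β k then 0 else 1) / (m + 1) ^ (k + 1)

/-- The shift maps `τ_j : Ω^m → Ω`,
`τ_j(α_1,…,α_m) = (j, (α_1^1,…,α_m^1), (α_1^2,…,α_m^2), …)`. -/
def tau {n m : ℕ} (j : Fin n) (a : Fin m → CodeSpace n m) : CodeSpace n m :=
  fun k => match k with
  | 0 => j
  | k + 1 => fun i => a i k

/-- Each shift map `τ_j` is Lipschitz with constant `m/(m+1)`
with respect to the maximum metric on `Ω^m`. -/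
theorem tau_lipschitz {n m : ℕ} (hn : 0 < n) (hm : 0 < m) (j : Fin n)
    (a b : Fin m → CodeSpace n m) :
    codeDist (tau j a) (tau j b) ≤
      (m / (m + 1) : ℝ) * ⨆ i : Fin m, codeDist (a i) (b i) := by
  have hM : (0:ℝ) < m + 1 := by positivity
  have hr0 : (0:ℝ) ≤ 1 / (m + 1) := by positivity
  have hr1 : (1:ℝ) / (m + 1) < 1 := by
    rw [div_lt_one hM]
    have : (0:ℝ) < m := by exact_mod_cast hm
    linarith
  have hif0 : ∀ {p : Prop} [Decidable p], (0:ℝ) ≤ if p then 0 else 1 := by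
    intros p hp; split <;> norm_num
  have hif1 : ∀ {p : Prop} [Decidable p], (if p then (0:ℝ) else 1) ≤ 1 := by
    intros p hp; split <;> norm_num
  have hpow : ∀ k : ℕ, (0:ℝ) < (m + 1) ^ k := fun k => pow_pos hM k
  have hsum : ∀ (α β : CodeSpace n m),
      Summable (fun k => (if α k = β k then (0:ℝ) else 1) / (m + 1) ^ (k + 1)) := by
    intro α β
    refine Summable.of_nonneg_of_le
      (fun k => div_nonneg hif0 (hpow _).le)
      (f := fun k => (1/(m+1):ℝ) * (1/(m+1))^k) (fun k => ?_) ?_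
    · calc (if α k = β k then (0:ℝ) else 1) / (m + 1) ^ (k + 1)
          ≤ 1 / (m + 1) ^ (k + 1) := by gcongr; exact hif1
        _ = (1/(m+1):ℝ) * (1/(m+1))^k := by
            rw [one_div_pow, one_div_mul_one_div, ← pow_succ']
    · exact (summable_geometric_of_lt_one hr0 hr1).mul_left _
  set S := ⨆ i : Fin m, codeDist (a i) (b i) with hS
  have hfin : ∀ i : Fin m, codeDist (a i) (b i) ≤ S :=
    fun i => le_ciSup (f := fun i => codeDist (a i) (b i)) (Set.finite_range _).bddAbove i
  have h1 : codeDist (tau j a) (tau j b)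
      = ∑' k : ℕ, (if tau j a (k+1) = tau j b (k+1) then (0:ℝ) else 1)
          / (m+1)^(k+1+1) := by
    have h0 : tau j a 0 = tau j b 0 := rfl
    rw [codeDist, Summable.tsum_eq_zero_add (hsum (tau j a) (tau j b)), if_pos h0]
    simp
  have h2 : ∀ k : ℕ, (if tau j a (k+1) = tau j b (k+1) then (0:ℝ) else 1) / (m+1)^(k+1+1)
      ≤ (1/(m+1)) * ∑ i : Fin m, (if a i k = b i k then (0:ℝ) else 1)/(m+1)^(k+1) := by
    intro k
    have hnnS : (0:ℝ) ≤ ∑ i : Fin m, (if a i k = b i k then (0:ℝ) else 1)/(m+1)^(k+1) :=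
      Finset.sum_nonneg fun i _ => div_nonneg hif0 (hpow _).le
    by_cases h : tau j a (k+1) = tau j b (k+1)
    · rw [if_pos h, zero_div]
      exact mul_nonneg hr0 hnnS
    · rw [if_neg h]
      obtain ⟨i0, hi0⟩ : ∃ i, a i k ≠ b i k := by
        by_contra hc
        push_neg at hc
        exact h (funext hc)
      have hle : (1:ℝ)/(m+1)^(k+1)
          ≤ ∑ i : Fin m, (if a i k = b i k then (0:ℝ) else 1)/(m+1)^(k+1) := by
        have := Finset.single_le_sum
          (f := fun i => (if a i k = b i k then (0:ℝ) else 1)/(m+1)^(k+1))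
          (fun i _ => div_nonneg hif0 (hpow _).le) (Finset.mem_univ i0)
        simpa [hi0] using this
      calc (1:ℝ)/(m+1)^(k+1+1) = (1/(m+1)) * (1/(m+1)^(k+1)) := by
            rw [pow_succ, one_div ((m+1:ℝ)^(k+1)*(m+1)), mul_inv]; ring
        _ ≤ (1/(m+1)) * ∑ i : Fin m, (if a i k = b i k then (0:ℝ) else 1)/(m+1)^(k+1) := by
            gcongr
  have hsumR : Summable (fun k : ℕ =>
      (1/(m+1):ℝ) * ∑ i : Fin m, (if a i k = b i k then (0:ℝ) else 1)/(m+1)^(k+1)) :=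
    (summable_sum (fun i _ => hsum (a i) (b i)) : Summable (fun k : ℕ =>
      ∑ i : Fin m, (if a i k = b i k then (0:ℝ) else 1)/(m+1)^(k+1))).mul_left _
  have hsumL : Summable (fun k : ℕ =>
      (if tau j a (k+1) = tau j b (k+1) then (0:ℝ) else 1) / (m+1)^(k+1+1)) :=
    Summable.of_nonneg_of_le (fun k => div_nonneg hif0 (hpow _).le) h2 hsumR
  calc codeDist (tau j a) (tau j b)
      = ∑' k : ℕ, (if tau j a (k+1) = tau j b (k+1) then (0:ℝ) else 1)/(m+1)^(k+1+1) := h1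
    _ ≤ ∑' k : ℕ, (1/(m+1):ℝ) * ∑ i : Fin m,
          (if a i k = b i k then (0:ℝ) else 1)/(m+1)^(k+1) :=
        Summable.tsum_le_tsum h2 hsumL hsumR
    _ = (1/(m+1):ℝ) * ∑' k : ℕ, ∑ i : Fin m,
          (if a i k = b i k then (0:ℝ) else 1)/(m+1)^(k+1) := tsum_mul_left
    _ = (1/(m+1):ℝ) * ∑ i : Fin m, codeDist (a i) (b i) := by
        rw [Summable.tsum_finsetSum fun i _ => hsum (a i) (b i)]
        rfl
    _ ≤ (1/(m+1):ℝ) * ∑ i : Fin m, S := by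
        gcongr with i _
        exact hfin i
    _ = (m / (m + 1) : ℝ) * S := by
        rw [Finset.sum_const, Finset.card_univ, Fintype.card_fin]
        push_cast
        ring
end

section
/- With Ω, τ_1,...,τ_n as above, the union ⋃_{j=1}^n τ_j(Ω × ... × Ω) (m factors) equals Ω. In particular, Ω is the attractor of the GIFS (τ_1,...,τ_n) on Ω. -/
open Filter Topology NNReal

/-- `⋃_{j=1}^n τ_j(Ω × ⋯ × Ω) = Ω`: the code space `Ω` is the
attractor of the GIFS `(τ_1,…,τ_n)` on `Ω`. -/
theorem tau_union_eq_univ {n m : ℕ} (hn : 0 < n) (hm : 0 < m) :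
    (⋃ j : Fin n, tau (m := m) j '' Set.univ) = Set.univ := by
  ext α
  simp only [Set.mem_iUnion, Set.image_univ, Set.mem_range, Set.mem_univ, iff_true]
  refine ⟨α 0, fun i k => α (k + 1) i, ?_⟩
  funext k
  cases k with
  | zero => rfl
  | succ k => rfl
end

section
/- Let (X,d) be a complete metric space and S = (f_1,...,f_n) a GIFS of order m with comparison function φ with attractor A. Define inductively for α ∈ Ω^k maps f_α and sets A_α = f_α(A_k) (where A_1 = A^m, A_{k+1} = (A_k)^m). Then for every α ∈ Ω^k, A_α = ⋃_{β ∈ Ω_{k+1}} A_{α ⌢ β}, where α ⌢ β denotes the concatenation extending α by β. -/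
open Filter Topology NNReal

/-- The iterated product spaces `X_1 = X^m`, `X_{k+1} = (X_k)^m`
(indexed from `0`). -/
def Xk (X : Type*) (m : ℕ) : ℕ → Type _
  | 0 => Fin m → X
  | k + 1 => Fin m → Xk X m k

/-- For a code `α = (α^1, α^2, …)`, the code `α(i) = (α^2_i, α^3_i, …)`. -/
def shiftCode {n m : ℕ} (α : CodeSpace n m) (i : Fin m) : CodeSpace n m :=
  fun k => (α (k + 1) : Fin m → OmegaL n m k) i

/-- The maps `f_α : X_{k+1} → X` for `α` (a code restricted to its first `k+1`
symbols): `f_{(α^1)} = f_{α^1}` and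
`f_α(x_1,…,x_m) = f_{α^1}(f_{α(1)}(x_1),…,f_{α(m)}(x_m))`. -/
def fA {X : Type*} {n m : ℕ} (f : Fin n → (Fin m → X) → X) :
    ∀ k : ℕ, CodeSpace n m → Xk X m k → X
  | 0, α, x => f (α 0) x
  | k + 1, α, x => f (α 0) (fun i => fA f k (shiftCode α i) ((x : Fin m → Xk X m k) i))

/-- The iterated products `K_1 = K^m`, `K_{k+1} = (K_k)^m` of a set `K ⊆ X`. -/
def Spow {X : Type*} (m : ℕ) (K : Set X) : ∀ k : ℕ, Set (Xk X m k)
  | 0 => Set.univ.pi fun _ => K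
  | k + 1 => (Set.univ.pi fun _ => Spow m K k : Set (Fin m → Xk X m k))

/-- The diagonal points `x^1 = x`, `x^{k+1} = (x^k,…,x^k)`. -/
def diag {X : Type*} {m : ℕ} (x : Fin m → X) : ∀ k : ℕ, Xk X m k
  | 0 => x
  | k + 1 => (fun _ => diag x k : Fin m → Xk X m k)

/-- Extending a code `α` (thought of as its first `k+1` symbols `α^1,…,α^{k+1}`)
by a new symbol `β ∈ Ω_{k+2}`: the concatenation `α ⌢ β`. -/
def extendCode {n m : ℕ} (α : CodeSpace n m) (k : ℕ) (β : OmegaL n m (k + 1)) :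
    CodeSpace n m :=
  fun j => if h : j = k + 1 then cast (congrArg (OmegaL n m) h.symm) β else α j

lemma extendCode_zero {n m : ℕ} (α : CodeSpace n m) (k : ℕ)
    (β : OmegaL n m (k + 1)) : extendCode α k β 0 = α 0 := by
  simp [extendCode]

lemma extendCode_succ {n m : ℕ} (α : CodeSpace n m) (k : ℕ)
    (β : OmegaL n m (k + 1)) : extendCode α k β (k + 1) = β := by
  simp [extendCode]

lemma shiftCode_extendCode {n m : ℕ} (α : CodeSpace n m) (k : ℕ)
    (β : OmegaL n m (k + 2)) (i : Fin m) :
    shiftCode (extendCode α (k + 1) β) i = extendCode (shiftCode α i) k (β i) := by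
  funext j
  by_cases h : j = k + 1
  · subst h
    simp [shiftCode, extendCode]
  · have h' : ¬ (j + 1 = k + 1 + 1) := by omega
    simp [shiftCode, extendCode, h, h']

/-- For a GIFS on a complete metric space with attractor `A`, the
pieces `A_α = f_α(A_k)` satisfy `A_α = ⋃_{β ∈ Ω_{k+2}} A_{α ⌢ β}` (a code of length
`k+1` extended by one more symbol). -/
theorem attractor_pieces_decomposition
    {X : Type*} [MetricSpace X] [CompleteSpace X]
    {n m : ℕ} (hn : 0 < n) (hm : 0 < m)
    (φ : ℝ≥0 → ℝ≥0)
    (hmono : Monotone φ) (husc : UpperSemicontinuous φ)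
    (hlt : ∀ t : ℝ≥0, 0 < t → φ t < t)
    (f : Fin n → (Fin m → X) → X)
    (hf : ∀ i, ∀ x y : Fin m → X, nndist (f i x) (f i y) ≤ φ (nndist x y))
    (A : Set X) (hAne : A.Nonempty) (hAc : IsCompact A)
    (hAfix : (⋃ i, f i '' Set.univ.pi fun _ => A) = A)
    (k : ℕ) (α : CodeSpace n m) :
    fA f k α '' Spow m A k =
      ⋃ β : OmegaL n m (k + 1),
        fA f (k + 1) (extendCode α k β) '' Spow m A (k + 1) := by
  have hA1 : ∀ i : Fin n, ∀ x : Fin m → X, (∀ j, x j ∈ A) → f i x ∈ A := by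
    intro i x hx
    rw [← hAfix]
    exact Set.mem_iUnion.2 ⟨i, ⟨x, fun j _ => hx j, rfl⟩⟩
  have hA2 : ∀ a ∈ A, ∃ i : Fin n, ∃ x : Fin m → X, (∀ j, x j ∈ A) ∧ f i x = a := by
    intro a ha
    rw [← hAfix] at ha
    obtain ⟨i, x, hx, hxa⟩ := Set.mem_iUnion.1 ha
    exact ⟨i, x, fun j => hx j (Set.mem_univ j), hxa⟩
  induction k generalizing α with
  | zero =>
    ext y
    simp only [Set.mem_iUnion]
    constructor
    · rintro ⟨x, hx, rfl⟩
      rw [Spow] at hx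
      replace hx := Set.mem_pi.1 hx
      choose β z hz hfz using fun i => hA2 (x i) (hx i (Set.mem_univ i))
      refine ⟨β, z, ?_, ?_⟩
      · rw [Spow]
        refine Set.mem_pi.2 ?_
        intro i _
        rw [Spow]
        refine Set.mem_pi.2 ?_
        exact fun j _ => hz i j
      · show f (extendCode α 0 β 0)
            (fun i => f (shiftCode (extendCode α 0 β) i 0) (z i)) = f (α 0) x
        rw [extendCode_zero α 0 β]
        congr 1
        funext i
        have : shiftCode (extendCode α 0 β) i 0 = β i := by
          show extendCode α 0 β 1 i = β i
          rw [extendCode_succ α 0 β]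
        rw [this, hfz]
    · rintro ⟨β, z, hz, rfl⟩
      rw [Spow] at hz
      replace hz := Set.mem_pi.1 hz
      refine ⟨fun i => f (β i) (z i), ?_, ?_⟩
      · rw [Spow]
        refine Set.mem_pi.2 ?_
        intro i _
        refine hA1 (β i) (z i) fun j => ?_
        have := hz i (Set.mem_univ i)
        rw [Spow] at this
        replace this := Set.mem_pi.1 this
        exact this j (Set.mem_univ j)
      · show f (α 0) _ = f (extendCode α 0 β 0)
            (fun i => f (shiftCode (extendCode α 0 β) i 0) (z i))
        rw [extendCode_zero]
        congr 1
  | succ k ih =>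
    ext y
    simp only [Set.mem_iUnion]
    constructor
    · rintro ⟨x, hx, rfl⟩
      rw [Spow] at hx
      replace hx := Set.mem_pi.1 hx
      have key : ∀ i : Fin m, ∃ β : OmegaL n m (k + 1), ∃ z ∈ Spow m A (k + 1),
          fA f (k + 1) (extendCode (shiftCode α i) k β) z
            = fA f k (shiftCode α i) (x i) := by
        intro i
        have : fA f k (shiftCode α i) (x i) ∈
            fA f k (shiftCode α i) '' Spow m A k :=
          ⟨x i, hx i (Set.mem_univ i), rfl⟩
        rw [ih (shiftCode α i)] at this
        obtain ⟨β, z, hz, hfz⟩ := Set.mem_iUnion.1 this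
        exact ⟨β, z, hz, hfz⟩
      choose β z hz hfz using key
      refine ⟨β, z, ?_, ?_⟩
      · rw [Spow]
        refine Set.mem_pi.2 ?_
        exact fun i _ => hz i
      · show f (extendCode α (k + 1) β 0)
            (fun i => fA f (k + 1) (shiftCode (extendCode α (k + 1) β) i) (z i))
            = f (α 0) (fun i => fA f k (shiftCode α i) (x i))
        rw [extendCode_zero α (k + 1) β]
        congr 1
        funext i
        rw [shiftCode_extendCode α k β i, hfz]
    · rintro ⟨β, z, hz, rfl⟩
      rw [Spow] at hz
      replace hz := Set.mem_pi.1 hz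
      have key : ∀ i : Fin m, ∃ x ∈ Spow m A k,
          fA f k (shiftCode α i) x
            = fA f (k + 1) (extendCode (shiftCode α i) k (β i)) (z i) := by
        intro i
        have : fA f (k + 1) (extendCode (shiftCode α i) k (β i)) (z i) ∈
            ⋃ γ : OmegaL n m (k + 1),
              fA f (k + 1) (extendCode (shiftCode α i) k γ) '' Spow m A (k + 1) :=
          Set.mem_iUnion.2 ⟨β i, ⟨z i, hz i (Set.mem_univ i), rfl⟩⟩
        rw [← ih (shiftCode α i)] at this
        obtain ⟨x, hx, hfx⟩ := this
        exact ⟨x, hx, hfx⟩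
      choose x hx hfx using key
      refine ⟨x, ?_, ?_⟩
      · rw [Spow]
        refine Set.mem_pi.2 ?_
        exact fun i _ => hx i
      · show f (α 0) (fun i => fA f k (shiftCode α i) (x i))
            = f (extendCode α (k + 1) β 0)
              (fun i => fA f (k + 1) (shiftCode (extendCode α (k + 1) β) i) (z i))
        rw [extendCode_zero]
        congr 1
        funext i
        rw [shiftCode_extendCode, hfx]
end

section
/- Let (X,d) be a metric space, S = (f_1,...,f_n) a GIFS of order m where each f_i is a generalized φ-contraction for a common comparison function φ. Let K ⊂ X be nonempty and bounded with diameter a, and define K_1 = K^m, K_{i+1} = (K_i)^m (with maximum metrics). Then for every α ∈ Ω with restriction α|_k ∈ Ω^k, diam(f_{α|_k}(K_k)) ≤ φ^k(a); consequently diam(f_{α|_k}(K_k)) → 0 as k → ∞. -/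
open Filter Topology NNReal ENNReal

/-- If each `f_i` is a generalized `φ`-contraction and `K` is
nonempty bounded with diameter `a`, then `diam (f_{α|_k}(K_k)) ≤ φ^k(a)` (here a code
of length `k+1` gives the bound `φ^{k+1}(a)`), and consequently the diameters tend
to `0`. -/
theorem diam_code_pieces_le
    {X : Type*} [MetricSpace X]
    {n m : ℕ} (hn : 0 < n) (hm : 0 < m)
    (φ : ℝ≥0 → ℝ≥0)
    (hmono : Monotone φ) (husc : UpperSemicontinuous φ)
    (hlt : ∀ t : ℝ≥0, 0 < t → φ t < t)
    (f : Fin n → (Fin m → X) → X)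
    (hf : ∀ i, ∀ x y : Fin m → X, nndist (f i x) (f i y) ≤ φ (nndist x y))
    (K : Set X) (hKne : K.Nonempty) (a : ℝ≥0)
    (hKa : EMetric.diam K = (a : ℝ≥0∞)) (α : CodeSpace n m) :
    (∀ k : ℕ, EMetric.diam (fA f k α '' Spow m K k) ≤ ((φ^[k + 1] a : ℝ≥0) : ℝ≥0∞)) ∧
    Tendsto (fun k : ℕ => EMetric.diam (fA f k α '' Spow m K k)) atTop (𝓝 0) := by
  -- φ 0 = 0
  have hphi0 : φ 0 = 0 := by
    by_contra h
    have hpos : 0 < φ 0 := pos_iff_ne_zero.mpr h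
    have h1 : φ 0 ≤ φ (φ 0) := hmono zero_le
    have h2 : φ (φ 0) < φ 0 := hlt _ hpos
    exact absurd h1 (not_le.mpr h2)
  have hle : ∀ t : ℝ≥0, φ t ≤ t := by
    intro t
    rcases eq_or_lt_of_le (zero_le : (0 : ℝ≥0) ≤ t) with h | h
    · rw [← h, hphi0]
    · exact (hlt t h).le
  -- iterates tend to 0
  have hanti : Antitone (fun k : ℕ => φ^[k] a) := by
    refine antitone_nat_of_succ_le fun k => ?_
    rw [Function.iterate_succ_apply']
    exact hle _
  have htend0 : Tendsto (fun k : ℕ => φ^[k] a) atTop (𝓝 0) := by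
    have hbdd : BddBelow (Set.range fun k : ℕ => φ^[k] a) := OrderBot.bddBelow _
    have hL : Tendsto (fun k : ℕ => φ^[k] a) atTop (𝓝 (⨅ k : ℕ, φ^[k] a)) :=
      tendsto_atTop_ciInf hanti hbdd
    have hL0 : (⨅ k : ℕ, φ^[k] a) = 0 := by
      by_contra h
      set L := ⨅ k : ℕ, φ^[k] a with hLdef
      have hLpos : 0 < L := pos_iff_ne_zero.mpr h
      have husc' : ∀ᶠ z in 𝓝 L, φ z < L := husc L L (hlt L hLpos)
      obtain ⟨k, hk⟩ := (hL.eventually husc').exists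
      have : L ≤ φ^[k + 1] a := ciInf_le hbdd (k + 1)
      rw [Function.iterate_succ_apply'] at this
      exact absurd hk (not_lt.mpr this)
    rwa [hL0] at hL
  -- key estimate
  have key : ∀ k : ℕ, ∀ α : CodeSpace n m, ∀ x ∈ Spow m K k, ∀ y ∈ Spow m K k,
      edist (fA f k α x) (fA f k α y) ≤ ((φ^[k + 1] a : ℝ≥0) : ℝ≥0∞) := by
    intro k
    induction k with
    | zero =>
      intro α x hx y hy
      have hxy : @nndist (Fin m → X) _ x y ≤ a := by
        refine nndist_pi_le_iff.mpr ?_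
        intro i
        have hxi : x i ∈ K := hx i (Set.mem_univ i)
        have hyi : y i ∈ K := hy i (Set.mem_univ i)
        have := EMetric.edist_le_diam_of_mem hxi hyi
        rw [show Metric.ediam K = (a : ℝ≥0∞) from hKa, edist_nndist, ENNReal.coe_le_coe] at this
        exact this
      calc edist (fA f 0 α x) (fA f 0 α y)
          = ((nndist (f (α 0) x) (f (α 0) y) : ℝ≥0) : ℝ≥0∞) := edist_nndist _ _
        _ ≤ ((φ (@nndist (Fin m → X) _ x y) : ℝ≥0) : ℝ≥0∞) := ENNReal.coe_le_coe.mpr (hf _ _ _)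
        _ ≤ ((φ a : ℝ≥0) : ℝ≥0∞) := ENNReal.coe_le_coe.mpr (hmono hxy)
        _ = ((φ^[0 + 1] a : ℝ≥0) : ℝ≥0∞) := rfl
    | succ k ih =>
      intro α x hx y hy
      have hi : ∀ i : Fin m,
          nndist (fA f k (shiftCode α i) ((x : Fin m → Xk X m k) i))
                 (fA f k (shiftCode α i) ((y : Fin m → Xk X m k) i)) ≤ φ^[k + 1] a := by
        intro i
        have hxi : (x : Fin m → Xk X m k) i ∈ Spow m K k := hx i (Set.mem_univ i)
        have hyi : (y : Fin m → Xk X m k) i ∈ Spow m K k := hy i (Set.mem_univ i)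
        have := ih (shiftCode α i) _ hxi _ hyi
        rwa [edist_nndist, ENNReal.coe_le_coe] at this
      have huv : nndist
          (fun i => fA f k (shiftCode α i) ((x : Fin m → Xk X m k) i))
          (fun i => fA f k (shiftCode α i) ((y : Fin m → Xk X m k) i)) ≤ φ^[k + 1] a := by
        rw [nndist_pi_le_iff]
        exact hi
      calc edist (fA f (k + 1) α x) (fA f (k + 1) α y)
          = ((nndist (f (α 0) (fun i => fA f k (shiftCode α i) ((x : Fin m → Xk X m k) i)))
                     (f (α 0) (fun i => fA f k (shiftCode α i) ((y : Fin m → Xk X m k) i)))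
              : ℝ≥0) : ℝ≥0∞) := edist_nndist _ _
        _ ≤ ((φ (nndist
              (fun i => fA f k (shiftCode α i) ((x : Fin m → Xk X m k) i))
              (fun i => fA f k (shiftCode α i) ((y : Fin m → Xk X m k) i))) : ℝ≥0) : ℝ≥0∞) :=
            ENNReal.coe_le_coe.mpr (hf _ _ _)
        _ ≤ ((φ (φ^[k + 1] a) : ℝ≥0) : ℝ≥0∞) := ENNReal.coe_le_coe.mpr (hmono huv)
        _ = ((φ^[k + 1 + 1] a : ℝ≥0) : ℝ≥0∞) := by
            simp [Function.iterate_succ_apply']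
  have hdiam : ∀ k : ℕ,
      EMetric.diam (fA f k α '' Spow m K k) ≤ ((φ^[k + 1] a : ℝ≥0) : ℝ≥0∞) := by
    intro k
    refine EMetric.diam_le ?_
    rintro _ ⟨x, hx, rfl⟩ _ ⟨y, hy, rfl⟩
    exact key k α x hx y hy
  refine ⟨hdiam, ?_⟩
  have hupper : Tendsto (fun k : ℕ => ((φ^[k + 1] a : ℝ≥0) : ℝ≥0∞)) atTop (𝓝 0) := by
    rw [show ((0 : ℝ≥0∞)) = ((0 : ℝ≥0) : ℝ≥0∞) by simp]
    exact ENNReal.tendsto_coe.mpr (htend0.comp (tendsto_add_atTop_nat 1))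
  exact tendsto_of_tendsto_of_tendsto_of_le_of_le tendsto_const_nhds hupper
    (fun k => zero_le) hdiam
end

section
/- Let (X,d) be a complete metric space and S = (f_1,...,f_n) a GIFS of order m with attractor A. For each α ∈ Ω, the intersection ⋂_{k∈ℕ} A_{α|_k} is a singleton, where A_{α|_k} = f_{α|_k}(A_k), A_1 = A^m, A_{k+1} = (A_k)^m. -/
open Filter Topology NNReal ENNReal

section Aux

variable {X : Type*} [MetricSpace X] {n m : ℕ}

noncomputable instance XkMS (m : ℕ) : ∀ k, MetricSpace (Xk X m k)
  | 0 => inferInstanceAs (MetricSpace (Fin m → X))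
  | k + 1 => letI : MetricSpace (Xk X m k) := XkMS m k
             (metricSpacePi : MetricSpace (Fin m → Xk X m k))

theorem spow_compact {K : Set X} (hK : IsCompact K) : ∀ k, IsCompact (Spow m K k) := by
  intro k
  induction k with
  | zero => exact isCompact_univ_pi fun _ => hK
  | succ k ih => exact isCompact_univ_pi fun _ => ih

theorem spow_nonempty {K : Set X} (hK : K.Nonempty) : ∀ k, (Spow m K k).Nonempty
  | 0 => ⟨fun _ => hK.choose, fun _ _ => hK.choose_spec⟩
  | k + 1 => ⟨fun _ => (spow_nonempty hK k).choose,
      fun _ _ => (spow_nonempty hK k).choose_spec⟩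

theorem comparison_le {φ : ℝ≥0 → ℝ≥0} (hmono : Monotone φ)
    (hlt : ∀ t : ℝ≥0, 0 < t → φ t < t) (t : ℝ≥0) : φ t ≤ t := by
  rcases eq_or_lt_of_le (zero_le : (0 : ℝ≥0) ≤ t) with h | h
  · rw [← h]
    by_contra hc
    push_neg at hc
    exact absurd ((hmono (zero_le : (0 : ℝ≥0) ≤ φ 0)).trans_lt (hlt (φ 0) hc)) (lt_irrefl _)
  · exact (hlt t h).le

theorem fA_lip {φ : ℝ≥0 → ℝ≥0} (hmono : Monotone φ)
    (hlt : ∀ t : ℝ≥0, 0 < t → φ t < t)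
    (f : Fin n → (Fin m → X) → X)
    (hf : ∀ i, ∀ x y : Fin m → X, nndist (f i x) (f i y) ≤ φ (nndist x y))
    (k : ℕ) : ∀ α : CodeSpace n m, LipschitzWith 1 (fA f k α) := by
  have hf1 : ∀ i, LipschitzWith 1 (f i) := by
    intro i
    apply LipschitzWith.of_dist_le_mul
    intro x y
    rw [NNReal.coe_one, one_mul, dist_nndist, dist_nndist]
    exact_mod_cast (hf i x y).trans (comparison_le hmono hlt _)
  induction k with
  | zero => exact fun α => hf1 (α 0)
  | succ k ih =>
    intro α
    have h2 : LipschitzWith 1 (fun x : Xk X m (k + 1) =>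
        fun i => fA f k (shiftCode α i) ((x : Fin m → Xk X m k) i)) := by
      apply LipschitzWith.of_dist_le_mul
      intro x y
      rw [NNReal.coe_one, one_mul, dist_pi_le_iff dist_nonneg]
      intro i
      calc dist (fA f k (shiftCode α i) (x i)) (fA f k (shiftCode α i) (y i))
          ≤ dist (x i) (y i) := by
            simpa using (ih (shiftCode α i)).dist_le_mul (x i) (y i)
        _ ≤ dist x y := dist_le_pi_dist x y i
    have h3 := (hf1 (α 0)).comp h2
    rw [one_mul] at h3
    exact h3

theorem fA_key {φ : ℝ≥0 → ℝ≥0} (hmono : Monotone φ)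
    (f : Fin n → (Fin m → X) → X)
    (hf : ∀ i, ∀ x y : Fin m → X, nndist (f i x) (f i y) ≤ φ (nndist x y))
    {A : Set X} {D : ℝ≥0} (hD : ∀ x ∈ A, ∀ y ∈ A, nndist x y ≤ D)
    (k : ℕ) : ∀ α : CodeSpace n m, ∀ x ∈ Spow m A k, ∀ y ∈ Spow m A k,
      nndist (fA f k α x) (fA f k α y) ≤ φ^[k + 1] D := by
  induction k with
  | zero =>
    intro α x hx y hy
    calc nndist (fA f 0 α x) (fA f 0 α y) ≤ φ (nndist x y) := hf _ _ _
      _ ≤ φ^[1] D := by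
          rw [Function.iterate_one]
          exact hmono (nndist_pi_le_iff.2 fun i => hD _ (hx i (Set.mem_univ i)) _
            (hy i (Set.mem_univ i)))
  | succ k ih =>
    intro α x hx y hy
    calc nndist (fA f (k + 1) α x) (fA f (k + 1) α y)
        ≤ φ (nndist (fun i => fA f k (shiftCode α i) ((x : Fin m → Xk X m k) i))
            (fun i => fA f k (shiftCode α i) ((y : Fin m → Xk X m k) i))) := hf _ _ _
      _ ≤ φ (φ^[k + 1] D) := hmono (nndist_pi_le_iff.2 fun i =>
          ih (shiftCode α i) (x i) (hx i (Set.mem_univ i)) (y i) (hy i (Set.mem_univ i)))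
      _ = φ^[k + 2] D := (Function.iterate_succ_apply' φ (k + 1) D).symm

theorem fA_dec (f : Fin n → (Fin m → X) → X) {A : Set X}
    (hAfix : (⋃ i, f i '' Set.univ.pi fun _ => A) = A)
    (k : ℕ) : ∀ α : CodeSpace n m,
      fA f (k + 1) α '' Spow m A (k + 1) ⊆ fA f k α '' Spow m A k := by
  induction k with
  | zero =>
    rintro α z ⟨x, hx, rfl⟩
    refine ⟨fun i => f (shiftCode α i 0) (x i), fun i _ => ?_, rfl⟩
    have : f (shiftCode α i 0) (x i) ∈ ⋃ j, f j '' Set.univ.pi fun _ => A :=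
      Set.mem_iUnion.2 ⟨shiftCode α i 0, ⟨x i, hx i (Set.mem_univ i), rfl⟩⟩
    rwa [hAfix] at this
  | succ k ih =>
    rintro α z ⟨x, hx, rfl⟩
    have h : ∀ i, fA f (k + 1) (shiftCode α i) ((x : Fin m → Xk X m (k + 1)) i) ∈
        fA f k (shiftCode α i) '' Spow m A k :=
      fun i => ih (shiftCode α i) ⟨x i, hx i (Set.mem_univ i), rfl⟩
    choose y hy hxy using h
    refine ⟨y, fun i _ => hy i, ?_⟩
    show f (α 0) (fun i => fA f k (shiftCode α i) (y i)) =
      f (α 0) (fun i => fA f (k + 1) (shiftCode α i) (x i))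
    exact congrArg _ (funext fun i => hxy i)

theorem phi_iter_tendsto {φ : ℝ≥0 → ℝ≥0} (hmono : Monotone φ)
    (husc : UpperSemicontinuous φ) (hlt : ∀ t : ℝ≥0, 0 < t → φ t < t)
    (D : ℝ≥0) : Tendsto (fun k => φ^[k] D) atTop (𝓝 0) := by
  have hanti : Antitone (fun k => φ^[k] D) := antitone_nat_of_succ_le fun k => by
    rw [Function.iterate_succ_apply']
    exact comparison_le hmono hlt _
  set L := ⨅ k, φ^[k] D with hL
  have hT : Tendsto (fun k => φ^[k] D) atTop (𝓝 L) :=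
    tendsto_atTop_ciInf hanti (OrderBot.bddBelow _)
  rcases eq_or_lt_of_le (zero_le : (0 : ℝ≥0) ≤ L) with h0 | h0
  · rwa [← h0] at hT
  · exfalso
    obtain ⟨y, hy1, hy2⟩ := exists_between (hlt L h0)
    have hev : ∀ᶠ t in 𝓝 L, φ t < y := husc L y hy1
    obtain ⟨k, hk⟩ := (hT.eventually hev).exists
    have hge : L ≤ φ^[k + 1] D := ciInf_le (OrderBot.bddBelow _) (k + 1)
    rw [Function.iterate_succ_apply'] at hge
    exact absurd (hge.trans_lt hk) (not_lt.2 hy2.le)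

end Aux

/-- For a GIFS on a complete metric space with attractor `A`, for
every code `α ∈ Ω` the intersection `⋂_k A_{α|_k}` is a singleton, where
`A_{α|_k} = f_{α|_k}(A_k)`. -/
theorem inter_code_pieces_singleton
    {X : Type*} [MetricSpace X] [CompleteSpace X]
    {n m : ℕ} (hn : 0 < n) (hm : 0 < m)
    (φ : ℝ≥0 → ℝ≥0)
    (hmono : Monotone φ) (husc : UpperSemicontinuous φ)
    (hlt : ∀ t : ℝ≥0, 0 < t → φ t < t)
    (f : Fin n → (Fin m → X) → X)
    (hf : ∀ i, ∀ x y : Fin m → X, nndist (f i x) (f i y) ≤ φ (nndist x y))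
    (A : Set X) (hAne : A.Nonempty) (hAc : IsCompact A)
    (hAfix : (⋃ i, f i '' Set.univ.pi fun _ => A) = A)
    (α : CodeSpace n m) :
    ∃ x : X, (⋂ k : ℕ, fA f k α '' Spow m A k) = {x} := by
  obtain ⟨C, hC⟩ := Metric.isBounded_iff.1 hAc.isBounded
  set D : ℝ≥0 := C.toNNReal with hDdef
  have hD : ∀ x ∈ A, ∀ y ∈ A, nndist x y ≤ D := by
    intro x hx y hy
    have h1 : (dist x y).toNNReal ≤ C.toNNReal := Real.toNNReal_mono (hC hx hy)
    rwa [dist_nndist, Real.toNNReal_coe] at h1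
  set B : ℕ → Set X := fun k => fA f k α '' Spow m A k with hB
  have hcpt : ∀ k, IsCompact (B k) := fun k =>
    (spow_compact hAc k).image (fA_lip hmono hlt f hf k α).continuous
  have hne : ∀ k, (B k).Nonempty := fun k => (spow_nonempty hAne k).image _
  have hdec : ∀ k, B (k + 1) ⊆ B k := fun k => fA_dec f hAfix k α
  obtain ⟨x, hx⟩ := IsCompact.nonempty_iInter_of_sequence_nonempty_isCompact_isClosed
    B hdec hne (hcpt 0) (fun k => (hcpt k).isClosed)
  refine ⟨x, Set.eq_singleton_iff_unique_mem.2 ⟨hx, ?_⟩⟩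
  intro y hy
  have key : ∀ k, nndist y x ≤ φ^[k + 1] D := by
    intro k
    obtain ⟨a, ha, hay⟩ := Set.mem_iInter.1 hy k
    obtain ⟨b, hb, hbx⟩ := Set.mem_iInter.1 hx k
    rw [← hay, ← hbx]
    exact fA_key hmono f hf hD k α a ha b hb
  have h0 : Tendsto (fun k => φ^[k + 1] D) atTop (𝓝 0) :=
    (phi_iter_tendsto hmono husc hlt D).comp (tendsto_add_atTop_nat 1)
  have hle0 : nndist y x ≤ 0 := ge_of_tendsto' h0 key
  exact eq_of_nndist_eq_zero (le_antisymm hle0 zero_le)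
end

section
/- Let (X,d) be a complete metric space and S = (f_1,...,f_n) a GIFS of order m with attractor A and address map g : Ω → X. Then for every α ∈ Ω and every nonempty compact H ⊂ X, the sets f_{α|_k}(H_k) converge to the singleton {g(α)} in the Hausdorff metric, where H_1 = H^m and H_{k+1} = (H_k)^m. -/
open Filter Topology NNReal ENNReal

noncomputable instance XkMetric (X : Type*) [MetricSpace X] (m : ℕ) :
    ∀ k, MetricSpace (Xk X m k)
  | 0 => inferInstanceAs (MetricSpace (Fin m → X))
  | k + 1 => @metricSpacePi (Fin m) (fun _ => Xk X m k) _ (fun _ => XkMetric X m k)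

lemma Spow_mono {X : Type*} {m : ℕ} {K K' : Set X} (h : K ⊆ K') :
    ∀ k, Spow m K k ⊆ Spow m K' k
  | 0 => Set.pi_mono fun _ _ => h
  | k + 1 => Set.pi_mono fun _ _ => Spow_mono h k

lemma Spow_nonempty {X : Type*} {m : ℕ} {K : Set X} (h : K.Nonempty) :
    ∀ k, (Spow m K k).Nonempty
  | 0 => ⟨fun _ => h.choose, fun _ _ => h.choose_spec⟩
  | k + 1 => ⟨fun _ => (Spow_nonempty h k).choose,
      fun _ _ => (Spow_nonempty h k).choose_spec⟩

lemma Spow_nndist_le {X : Type*} [MetricSpace X] {m : ℕ} {K : Set X} {C : ℝ≥0}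
    (hC : ∀ a ∈ K, ∀ b ∈ K, nndist a b ≤ C) :
    ∀ k, ∀ x ∈ Spow m K k, ∀ y ∈ Spow m K k, nndist x y ≤ C
  | 0, x, hx, y, hy => nndist_pi_le_iff.2 fun i =>
      hC _ (hx i (Set.mem_univ i)) _ (hy i (Set.mem_univ i))
  | k + 1, x, hx, y, hy => nndist_pi_le_iff.2 fun i =>
      Spow_nndist_le hC k _ (hx i (Set.mem_univ i)) _ (hy i (Set.mem_univ i))

lemma nndist_fA_le {X : Type*} [MetricSpace X] {n m : ℕ}
    {φ : ℝ≥0 → ℝ≥0} (hmono : Monotone φ)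
    {f : Fin n → (Fin m → X) → X}
    (hf : ∀ i, ∀ x y : Fin m → X, nndist (f i x) (f i y) ≤ φ (nndist x y)) :
    ∀ k (α : CodeSpace n m) (x y : Xk X m k),
      nndist (fA f k α x) (fA f k α y) ≤ φ^[k + 1] (nndist x y)
  | 0, α, x, y => hf (α 0) x y
  | k + 1, α, x, y => by
      refine (hf (α 0) _ _).trans ?_
      rw [Function.iterate_succ_apply']
      refine hmono ?_
      refine (nndist_pi_le_iff.2 fun i => ?_)
      exact (nndist_fA_le hmono hf k (shiftCode α i) (x i) (y i)).trans
        ((hmono.iterate (k + 1)) (nndist_le_pi_nndist x y i))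

lemma phi_iter_tendsto_zero {φ : ℝ≥0 → ℝ≥0}
    (hmono : Monotone φ) (husc : UpperSemicontinuous φ)
    (hlt : ∀ t : ℝ≥0, 0 < t → φ t < t) (C : ℝ≥0) :
    Tendsto (fun k : ℕ => φ^[k] C) atTop (𝓝 0) := by
  have hle : ∀ t : ℝ≥0, φ t ≤ t := by
    intro t
    rcases eq_zero_or_pos t with h | h
    · subst h
      by_contra h0
      have hp : 0 < φ 0 := pos_iff_ne_zero.mpr fun h => h0 (le_of_eq h)
      exact absurd (hmono (zero_le : 0 ≤ φ 0)) (not_le.2 (hlt _ hp))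
    · exact (hlt t h).le
  have hanti : Antitone fun k : ℕ => φ^[k] C := by
    refine antitone_nat_of_succ_le fun k => ?_
    rw [Function.iterate_succ_apply']
    exact hle _
  have htend : Tendsto (fun k : ℕ => φ^[k] C) atTop (𝓝 (⨅ k, φ^[k] C)) :=
    tendsto_atTop_ciInf hanti (OrderBot.bddBelow _)
  have hL : (⨅ k : ℕ, φ^[k] C) = 0 := by
    by_contra hL0
    set L := ⨅ k : ℕ, φ^[k] C with hLdef
    have hLpos : 0 < L := pos_iff_ne_zero.mpr hL0
    have hev : ∀ᶠ t in 𝓝 L, φ t < L := husc L L (hlt L hLpos)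
    obtain ⟨k, hk⟩ := (htend.eventually hev).exists
    have : L ≤ φ^[k + 1] C := ciInf_le (OrderBot.bddBelow _) (k + 1)
    rw [Function.iterate_succ_apply'] at this
    exact absurd this (not_le.2 hk)
  rw [hL] at htend
  exact htend

/-- For every `α ∈ Ω` and nonempty compact `H ⊆ X`, the sets
`f_{α|_k}(H_k)` converge to the singleton `{g α}` in the Hausdorff metric. -/
theorem code_pieces_tendsto_singleton
    {X : Type*} [MetricSpace X] [CompleteSpace X]
    {n m : ℕ} (hn : 0 < n) (hm : 0 < m)
    (φ : ℝ≥0 → ℝ≥0)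
    (hmono : Monotone φ) (husc : UpperSemicontinuous φ)
    (hlt : ∀ t : ℝ≥0, 0 < t → φ t < t)
    (f : Fin n → (Fin m → X) → X)
    (hf : ∀ i, ∀ x y : Fin m → X, nndist (f i x) (f i y) ≤ φ (nndist x y))
    (A : Set X) (hAne : A.Nonempty) (hAc : IsCompact A)
    (hAfix : (⋃ i, f i '' Set.univ.pi fun _ => A) = A)
    (g : CodeSpace n m → X)
    (hg : ∀ α : CodeSpace n m, (⋂ k : ℕ, fA f k α '' Spow m A k) = {g α})
    (α : CodeSpace n m) (H : Set X) (hHc : IsCompact H) (hHne : H.Nonempty) :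
    Tendsto (fun k : ℕ => EMetric.hausdorffEdist (fA f k α '' Spow m H k) ({g α} : Set X))
      atTop (𝓝 0) := by
  classical
  set H' : Set X := H ∪ A with hH'def
  have hH'c : IsCompact H' := hHc.union hAc
  have hH'ne : H'.Nonempty := hHne.mono Set.subset_union_left
  -- a uniform bound on distances within H'
  obtain ⟨C, hC⟩ : ∃ C : ℝ≥0, ∀ a ∈ H', ∀ b ∈ H', nndist a b ≤ C := by
    refine ⟨(EMetric.diam H').toNNReal, fun a ha b hb => ?_⟩
    have h1 : edist a b ≤ EMetric.diam H' := EMetric.edist_le_diam_of_mem ha hb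
    have h2 : EMetric.diam H' ≠ ⊤ := hH'c.isBounded.ediam_ne_top
    rw [← ENNReal.coe_toNNReal h2] at h1
    exact_mod_cast (edist_nndist a b ▸ h1)
  -- g α belongs to each piece over A
  have hgmem : ∀ k : ℕ, g α ∈ fA f k α '' Spow m A k := by
    intro k
    have : g α ∈ ⋂ k : ℕ, fA f k α '' Spow m A k := by
      rw [hg α]; exact rfl
    exact Set.mem_iInter.1 this k
  -- bound the Hausdorff distance by the iterated φ of C
  have hbound : ∀ k : ℕ,
      EMetric.hausdorffEdist (fA f k α '' Spow m H k) ({g α} : Set X)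
        ≤ (φ^[k + 1] C : ℝ≥0∞) := by
    intro k
    have hsubH : fA f k α '' Spow m H k ⊆ fA f k α '' Spow m H' k :=
      Set.image_mono (Spow_mono Set.subset_union_left k)
    have hsubA : fA f k α '' Spow m A k ⊆ fA f k α '' Spow m H' k :=
      Set.image_mono (Spow_mono Set.subset_union_right k)
    have hedist : ∀ u ∈ fA f k α '' Spow m H' k, ∀ v ∈ fA f k α '' Spow m H' k,
        edist u v ≤ (φ^[k + 1] C : ℝ≥0∞) := by
      rintro u ⟨x, hx, rfl⟩ v ⟨y, hy, rfl⟩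
      rw [edist_nndist]
      exact_mod_cast (nndist_fA_le hmono hf k α x y).trans
        ((hmono.iterate (k + 1)) (Spow_nndist_le hC k x hx y hy))
    obtain ⟨x₀, hx₀⟩ := (Spow_nonempty hHne k).image (fA f k α)
    refine EMetric.hausdorffEdist_le_of_mem_edist ?_ ?_
    · intro u hu
      exact ⟨g α, rfl, hedist u (hsubH hu) _ (hsubA (hgmem k))⟩
    · rintro v (rfl : v = g α)
      exact ⟨x₀, hx₀, hedist _ (hsubA (hgmem k)) _ (hsubH hx₀)⟩
  -- conclude by squeezing
  have htend : Tendsto (fun k : ℕ => (φ^[k + 1] C : ℝ≥0∞)) atTop (𝓝 0) := by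
    have h1 : Tendsto (fun k : ℕ => φ^[k] C) atTop (𝓝 0) :=
      phi_iter_tendsto_zero hmono husc hlt C
    have h2 : Tendsto (fun k : ℕ => φ^[k + 1] C) atTop (𝓝 0) :=
      h1.comp (tendsto_add_atTop_nat 1)
    simpa using (ENNReal.tendsto_coe.2 h2)
  exact tendsto_of_tendsto_of_tendsto_of_le_of_le tendsto_const_nhds htend
    (fun k => zero_le) hbound
end

section
/- Let (X,d) be a complete metric space, S = (f_1,...,f_n) a GIFS of order m with address map g : Ω → X, and define g_m : Ω^m → X^m by g_m(α_1,...,α_m) = (g(α_1),...,g(α_m)). Then for every i = 1,...,n, f_i ∘ g_m = g ∘ τ_i, where τ_i : Ω^m → Ω are the code-space shift maps. -/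
open Filter Topology NNReal ENNReal

/-- With `g_m(α_1,…,α_m) = (g α_1, …, g α_m)`, for every
`i = 1,…,n` one has `f_i ∘ g_m = g ∘ τ_i`. -/
theorem coding_map_conjugates
    {X : Type*} [MetricSpace X] [CompleteSpace X]
    {n m : ℕ} (hn : 0 < n) (hm : 0 < m)
    (φ : ℝ≥0 → ℝ≥0)
    (hmono : Monotone φ) (husc : UpperSemicontinuous φ)
    (hlt : ∀ t : ℝ≥0, 0 < t → φ t < t)
    (f : Fin n → (Fin m → X) → X)
    (hf : ∀ i, ∀ x y : Fin m → X, nndist (f i x) (f i y) ≤ φ (nndist x y))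
    (A : Set X) (hAne : A.Nonempty) (hAc : IsCompact A)
    (hAfix : (⋃ i, f i '' Set.univ.pi fun _ => A) = A)
    (g : CodeSpace n m → X)
    (hg : ∀ α : CodeSpace n m, (⋂ k : ℕ, fA f k α '' Spow m A k) = {g α})
    (i : Fin n) (a : Fin m → CodeSpace n m) :
    f i (fun j => g (a j)) = g (tau i a) := by
  -- g α ∈ fA f k α '' Spow m A k for all k
  have hmem : ∀ (α : CodeSpace n m) (k : ℕ), g α ∈ fA f k α '' Spow m A k := by
    intro α k
    have : g α ∈ ⋂ k : ℕ, fA f k α '' Spow m A k := by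
      rw [hg α]; exact rfl
    exact Set.mem_iInter.mp this k
  -- f i (g ∘ a) belongs to every level of the intersection for tau i a
  have hkey : f i (fun j => g (a j)) ∈ ⋂ k : ℕ, fA f k (tau i a) '' Spow m A k := by
    refine Set.mem_iInter.mpr fun k => ?_
    cases k with
    | zero =>
      -- need each g (a j) ∈ A
      refine ⟨fun j => g (a j), ?_, rfl⟩
      intro j _
      obtain ⟨x, hx, hxe⟩ := hmem (a j) 0
      rw [← hAfix]
      exact Set.mem_iUnion.mpr ⟨a j 0, ⟨x, hx, hxe⟩⟩
    | succ k =>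
      choose x hx hxe using fun j => hmem (a j) k
      refine ⟨(fun j => x j : Fin m → Xk X m k), fun j _ => hx j, ?_⟩
      show f ((tau i a) 0) (fun j => fA f k (shiftCode (tau i a) j) (x j)) = _
      have h1 : (tau i a) 0 = i := rfl
      have h2 : ∀ j, shiftCode (tau i a) j = a j := fun j => rfl
      rw [h1]
      congr 1
      funext j
      rw [h2 j, hxe j]
  rw [hg (tau i a)] at hkey
  exact hkey
end

section
/- Let (X,d) be a complete metric space and S = (f_1,...,f_n) a GIFS of order m consisting of generalized φ-contractions, with attractor A_S. Then for every nonempty compact K ⊂ X there exists a closed bounded set H ⊂ X with K ⊂ H and F_S(H,...,H) ⊂ H, where F_S(D_1,...,D_m) = ⋃_i f_i(D_1 × ... × D_m). -/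
open Filter Topology NNReal

/-- For a GIFS of generalized `φ`-contractions on a complete metric
space with attractor `A_S`, every nonempty compact `K ⊆ X` is contained in a closed
bounded set `H` with `F_S(H,…,H) = ⋃ i, f_i(H × ⋯ × H) ⊆ H`. -/
theorem exists_closed_bounded_invariant
    {X : Type*} [MetricSpace X] [CompleteSpace X]
    {m n : ℕ} (hm : 0 < m) (hn : 0 < n)
    (φ : ℝ≥0 → ℝ≥0)
    (hmono : Monotone φ) (husc : UpperSemicontinuous φ)
    (hlt : ∀ t : ℝ≥0, 0 < t → φ t < t)
    (f : Fin n → (Fin m → X) → X)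
    (hf : ∀ i, ∀ x y : Fin m → X, nndist (f i x) (f i y) ≤ φ (nndist x y))
    (A : Set X) (hAne : A.Nonempty) (hAc : IsCompact A)
    (hAfix : (⋃ i, f i '' Set.univ.pi fun _ => A) = A)
    (K : Set X) (hKc : IsCompact K) (hKne : K.Nonempty) :
    ∃ H : Set X, IsClosed H ∧ Bornology.IsBounded H ∧ K ⊆ H ∧
      (⋃ i, f i '' Set.univ.pi fun _ => H) ⊆ H := by
  classical
  obtain ⟨a, haA⟩ := hAne
  obtain ⟨r, hKr⟩ := hKc.isBounded.subset_closedBall a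
  set t : ℝ := max r 0 with ht
  have ht0 : 0 ≤ t := le_max_right _ _
  -- φ vanishes at 0, hence φ s ≤ s for all s
  have hφ0 : φ 0 = 0 := by
    by_contra h
    have hpos : 0 < φ 0 := pos_iff_ne_zero.2 h
    exact absurd ((hmono (zero_le : (0:ℝ≥0) ≤ φ 0)).trans_lt (hlt _ hpos)) (lt_irrefl _)
  have hφle : ∀ s, φ s ≤ s := by
    intro s
    rcases eq_or_lt_of_le (zero_le : (0:ℝ≥0) ≤ s) with hs | hs
    · rw [← hs, hφ0]
    · exact (hlt s hs).le
  -- each f i is 1-Lipschitz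
  have hLip : ∀ i (x y : Fin m → X), dist (f i x) (f i y) ≤ dist x y := by
    intro i x y
    have : nndist (f i x) (f i y) ≤ nndist x y := (hf i x y).trans (hφle _)
    exact_mod_cast this
  have hcont : ∀ i, Continuous (f i) := fun i =>
    (LipschitzWith.of_dist_le_mul (K := 1) fun x y => by
      simpa using hLip i x y).continuous
  -- the iterated sequence of sets
  set seq : ℕ → Set X :=
    fun k => Nat.rec K (fun _ S => S ∪ ⋃ i, f i '' Set.univ.pi fun _ => S) k with hseq
  have hseq_succ : ∀ k, seq (k + 1) = seq k ∪ ⋃ i, f i '' Set.univ.pi fun _ => seq k :=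
    fun k => rfl
  have hmonoSeq : Monotone seq :=
    monotone_nat_of_le_succ fun k => by rw [hseq_succ]; exact Set.subset_union_left
  set U : Set X := ⋃ k, seq k with hU
  -- every seq k lies within distance t of A
  have hCt : ∀ k, ∀ x ∈ seq k, Metric.infDist x A ≤ t := by
    intro k
    induction k with
    | zero =>
      intro x hx
      calc Metric.infDist x A ≤ dist x a := Metric.infDist_le_dist_of_mem haA
        _ ≤ r := by simpa using hKr hx
        _ ≤ t := le_max_left _ _
    | succ k ih =>
      intro x hx
      rw [hseq_succ] at hx
      rcases hx with hx | hx
      · exact ih x hx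
      · rw [Set.mem_iUnion] at hx
        obtain ⟨i, y, hy, rfl⟩ := hx
        have hy' : ∀ j, y j ∈ seq k := fun j => hy j (Set.mem_univ j)
        -- choose nearest points in A
        have hchoice : ∀ j, ∃ b ∈ A, Metric.infDist (y j) A = dist (y j) b := fun j =>
          hAc.exists_infDist_eq_dist ⟨a, haA⟩ (y j)
        choose b hbA hbd using hchoice
        have hbmem : f i b ∈ A := by
          rw [← hAfix]
          exact Set.mem_iUnion.2 ⟨i, ⟨b, fun j _ => hbA j, rfl⟩⟩
        have hdyb : dist y b ≤ t := by
          rw [dist_pi_le_iff ht0]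
          intro j
          rw [← hbd j]
          exact ih (y j) (hy' j)
        calc Metric.infDist (f i y) A ≤ dist (f i y) (f i b) :=
              Metric.infDist_le_dist_of_mem hbmem
          _ ≤ dist y b := hLip i y b
          _ ≤ t := hdyb
  -- F maps U into U
  have hFU : ∀ i, f i '' Set.univ.pi (fun _ : Fin m => U) ⊆ U := by
    rintro i z ⟨x, hx, rfl⟩
    have hx' : ∀ j, ∃ k, x j ∈ seq k := fun j => Set.mem_iUnion.1 (hx j (Set.mem_univ j))
    choose k hk using hx'
    set N := Finset.univ.sup k with hN
    have hxN : ∀ j, x j ∈ seq N := fun j =>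
      hmonoSeq (Finset.le_sup (Finset.mem_univ j)) (hk j)
    have : f i x ∈ seq (N + 1) := by
      rw [hseq_succ]
      exact Or.inr (Set.mem_iUnion.2 ⟨i, ⟨x, fun j _ => hxN j, rfl⟩⟩)
    exact Set.mem_iUnion.2 ⟨N + 1, this⟩
  refine ⟨closure U, isClosed_closure, ?_, ?_, ?_⟩
  · -- boundedness
    have hCclosed : IsClosed {x : X | Metric.infDist x A ≤ t} :=
      isClosed_le (Metric.continuous_infDist_pt A) continuous_const
    have hUC : U ⊆ {x : X | Metric.infDist x A ≤ t} := by
      intro x hx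
      obtain ⟨k, hk⟩ := Set.mem_iUnion.1 hx
      exact hCt k x hk
    have hclUC : closure U ⊆ {x : X | Metric.infDist x A ≤ t} :=
      hCclosed.closure_subset_iff.2 hUC
    have hCb : {x : X | Metric.infDist x A ≤ t} ⊆ Metric.closedBall a (t + Metric.diam A) := by
      intro x hx
      obtain ⟨c, hcA, hcd⟩ := hAc.exists_infDist_eq_dist ⟨a, haA⟩ x
      have : dist x a ≤ dist x c + dist c a := dist_triangle x c a
      have hca : dist c a ≤ Metric.diam A :=
        Metric.dist_le_diam_of_mem hAc.isBounded hcA haA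
      have hxc : dist x c ≤ t := by rw [← hcd]; exact hx
      exact Metric.mem_closedBall.2 (this.trans (add_le_add hxc hca))
    exact Metric.isBounded_closedBall.subset (hclUC.trans hCb)
  · -- K ⊆ closure U
    exact (Set.subset_iUnion seq 0).trans subset_closure
  · -- invariance
    intro z hz
    rw [Set.mem_iUnion] at hz
    obtain ⟨i, y, hy, rfl⟩ := hz
    have hy' : y ∈ closure (Set.univ.pi fun _ : Fin m => U) := by
      rw [closure_pi_set]
      exact hy
    have : f i y ∈ closure (f i '' Set.univ.pi fun _ : Fin m => U) :=
      (image_closure_subset_closure_image (hcont i)) ⟨y, hy', rfl⟩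
    exact closure_mono (hFU i) this
end

section
/- Let X be a topological space admitting a proper family of compact subsets {D_α : α ∈ ℱ} indexed by a proper tree ℱ, where X itself is compact Hausdorff. Then for every metric d metrizing X, setting a_k = max{diam(D_α) : α ∈ ℱ, |α| = k} (assuming each level of ℱ is finite), we have a_k → 0 as k → ∞. -/
open Filter Topology CategoryTheory

/-- König's lemma for prefix-closed sets of lists with finite nonempty levels. -/
lemma konig_branch (B : Set (List ℕ))
    (hcl : ∀ α ∈ B, ∀ m ≤ α.length, α.take m ∈ B)
    (hfin : ∀ k, {α ∈ B | α.length = k}.Finite)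
    (hnon : ∀ k, ∃ α ∈ B, α.length = k) :
    ∃ b : ℕ → ℕ, ∀ k, List.ofFn (fun i : Fin k => b i) ∈ B := by
  classical
  let T : ℕ → Type := fun k => {α : List ℕ // α ∈ B ∧ α.length = k}
  let f : ∀ n, T (n + 1) → T n := fun n α =>
    ⟨α.1.take n, hcl _ α.2.1 n (by omega), by simp [α.2.2]⟩
  let Fu := CategoryTheory.Functor.ofOpSequence (C := Type) (fun n => TypeCat.ofHom (f n))
  haveI : ∀ j : ℕᵒᵖ, Finite (Fu.obj j) := fun j => (hfin j.unop).to_subtype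
  haveI : ∀ j : ℕᵒᵖ, Nonempty (Fu.obj j) := fun j => by
    obtain ⟨α, h1, h2⟩ := hnon j.unop
    exact ⟨⟨α, h1, h2⟩⟩
  obtain ⟨u, hu⟩ := nonempty_sections_of_finite_inverse_system Fu
  have hcomp : ∀ n : ℕ,
      (u (Opposite.op (n + 1))).1.take n = (u (Opposite.op n)).1 := by
    intro n
    have h := hu (homOfLE (Nat.le_add_right n 1)).op
    rw [CategoryTheory.Functor.ofOpSequence_map_homOfLE_succ] at h
    exact congrArg Subtype.val h
  refine ⟨fun n => (u (Opposite.op (n + 1))).1.getD n 0, ?_⟩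
  have key : ∀ k : ℕ,
      (u (Opposite.op k)).1
        = List.ofFn (fun i : Fin k => (u (Opposite.op (i + 1))).1.getD i 0) := by
    intro k
    induction k with
    | zero =>
      have := (u (Opposite.op 0)).2.2
      simpa using List.length_eq_zero_iff.mp this
    | succ k ih =>
      have hlen : k < (u (Opposite.op (k + 1))).1.length := by
        have h := (u (Opposite.op (k + 1))).2.2
        exact lt_of_lt_of_le (Nat.lt_succ_self k) (le_of_eq h.symm)
      have h1 : (u (Opposite.op (k + 1))).1.take k
            ++ [(u (Opposite.op (k + 1))).1[k]]
          = (u (Opposite.op (k + 1))).1 := by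
        rw [← List.concat_eq_append, List.take_concat_get]
        exact List.take_of_length_le (le_of_eq (u (Opposite.op (k + 1))).2.2)
      have hget : (u (Opposite.op (k + 1))).1.getD k 0
          = (u (Opposite.op (k + 1))).1[k] := List.getD_eq_getElem _ _ hlen
      rw [← h1, hcomp k, ih, ← hget]
      rw [List.ofFn_succ']
      simp [List.concat_eq_append]
  intro k
  have := (u (Opposite.op k)).2.1
  rwa [key k] at this

/-- A proper tree: a family of finite sequences of naturals closed under initial
segments, in which every member has at least one but only finitely many immediate
extensions. -/
def ProperTree (F : Set (List ℕ)) : Prop :=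
  (∀ α ∈ F, ∀ m ≤ α.length, α.take m ∈ F) ∧
  (∀ α ∈ F, {k : ℕ | α ++ [k] ∈ F}.Finite ∧ {k : ℕ | α ++ [k] ∈ F}.Nonempty)

/-- A proper family of compact sets adjusted to a proper tree `F`:
`D_∅ = X`, `D_α = ⋃ {D_{α⌢k} : α⌢k ∈ F}`, and for every infinite node (branch) `b` of
`F` the intersection `⋂_k D_{b|_k}` is a singleton. -/
def ProperFamily {X : Type*} [TopologicalSpace X] (F : Set (List ℕ))
    (D : List ℕ → Set X) : Prop :=
  (∀ α ∈ F, IsCompact (D α)) ∧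
  D [] = Set.univ ∧
  (∀ α ∈ F, D α = ⋃ k ∈ {k : ℕ | α ++ [k] ∈ F}, D (α ++ [k])) ∧
  (∀ b : ℕ → ℕ, (∀ k : ℕ, List.ofFn (fun i : Fin k => b i) ∈ F) →
    ∃ x : X, (⋂ k : ℕ, D (List.ofFn (fun i : Fin k => b i))) = {x})

/-- If a compact Hausdorff space `X` admits a proper family of
compact sets adjusted to a proper tree `F` whose levels are finite, then for every
metric `d` metrizing `X`, the maximal diameter of the sets of level `k` tends to `0`:
for all `ε > 0` eventually all level-`k` sets have diameter `≤ ε`. -/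
theorem proper_family_diam_tendsto_zero
    {X : Type*} [t : TopologicalSpace X] [CompactSpace X] [T2Space X]
    (F : Set (List ℕ)) (hF : ProperTree F) (hne : [] ∈ F)
    (D : List ℕ → Set X) (hD : ProperFamily F D)
    (hlevels : ∀ k : ℕ, {α ∈ F | α.length = k}.Finite)
    (dm : MetricSpace X)
    (hdm : dm.toUniformSpace.toTopologicalSpace = t) :
    ∀ ε > (0 : ℝ), ∃ N : ℕ, ∀ k ≥ N, ∀ α ∈ F, α.length = k →
      @Metric.diam X dm.toPseudoMetricSpace (D α) ≤ ε := by
  subst hdm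
  intro ε hε
  obtain ⟨hcpt, hD0, hDcov, hDsing⟩ := hD
  -- single-step monotonicity
  have hstep : ∀ α ∈ F, ∀ k : ℕ, α ++ [k] ∈ F → D (α ++ [k]) ⊆ D α := by
    intro α hα k hk
    rw [hDcov α hα]
    exact Set.subset_biUnion_of_mem (u := fun k => D (α ++ [k])) hk
  -- prefix monotonicity
  have htake : ∀ α ∈ F, ∀ m ≤ α.length, D α ⊆ D (α.take m) := by
    intro α hα m hm
    have main : ∀ i, m ≤ i → i ≤ α.length → D (α.take i) ⊆ D (α.take m) := by
      intro i
      induction i with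
      | zero => intro h1 _; interval_cases m; exact subset_rfl
      | succ i ih =>
        intro h1 h2
        rcases Nat.eq_or_lt_of_le h1 with rfl | h1'
        · exact subset_rfl
        · have hi : i < α.length := h2
          have h3 : α.take i ++ [α[i]] = α.take (i + 1) := by
            rw [← List.take_concat_get hi, List.concat_eq_append]
          have htF : α.take (i + 1) ∈ F := hF.1 α hα (i + 1) h2
          have htF' : α.take i ∈ F := hF.1 α hα i (le_of_lt hi)
          have : D (α.take (i + 1)) ⊆ D (α.take i) := by
            rw [← h3]
            exact hstep _ htF' _ (h3 ▸ htF)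
          exact this.trans (ih (by omega) (by omega))
    have := main α.length hm le_rfl
    rwa [List.take_length] at this
  by_contra hcon
  push_neg at hcon
  -- the "bad" set
  set B : Set (List ℕ) := {α ∈ F | ε < Metric.diam (D α)} with hB
  have hBcl : ∀ α ∈ B, ∀ m ≤ α.length, α.take m ∈ B := by
    intro α hα m hm
    refine ⟨hF.1 α hα.1 m hm, lt_of_lt_of_le hα.2 ?_⟩
    exact Metric.diam_mono (htake α hα.1 m hm) ((hcpt _ (hF.1 α hα.1 m hm)).isBounded)
  have hBfin : ∀ k, {α ∈ B | α.length = k}.Finite := by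
    intro k
    exact (hlevels k).subset (fun α hα => ⟨hα.1.1, hα.2⟩)
  have hBnon : ∀ k, ∃ α ∈ B, α.length = k := by
    intro k
    obtain ⟨k', hk', α, hαF, hαl, hαd⟩ := hcon k
    refine ⟨α.take k, hBcl α ⟨hαF, hαd⟩ k (by omega), ?_⟩
    simp [hαl]; omega
  obtain ⟨b, hb⟩ := konig_branch B hBcl hBfin hBnon
  have hbF : ∀ k, List.ofFn (fun i : Fin k => b i) ∈ F := fun k => (hb k).1
  obtain ⟨x, hx⟩ := hDsing b hbF
  set C : ℕ → Set X := fun k => D (List.ofFn (fun i : Fin k => b i)) with hC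
  have hCc : ∀ k, IsCompact (C k) := fun k => hcpt _ (hbF k)
  have hofn : ∀ k, List.ofFn (fun i : Fin (k + 1) => b i)
      = List.ofFn (fun i : Fin k => b i) ++ [b k] := by
    intro k
    rw [List.ofFn_succ']
    simp [List.concat_eq_append]
  have hCmono : ∀ k, C (k + 1) ⊆ C k := by
    intro k
    show D (List.ofFn fun i : Fin (k + 1) => b i) ⊆ D (List.ofFn fun i : Fin k => b i)
    rw [hofn k]
    exact hstep _ (hbF k) _ (by rw [← hofn k]; exact hbF (k + 1))
  have hball : ∃ k, C k ⊆ Metric.ball x (ε / 2) := by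
    by_contra hb2
    push_neg at hb2
    set K : ℕ → Set X := fun k => C k \ Metric.ball x (ε / 2) with hK
    have hKne : ∀ k, (K k).Nonempty := by
      intro k
      obtain ⟨y, hy1, hy2⟩ := Set.not_subset.mp (hb2 k)
      exact ⟨y, hy1, hy2⟩
    have hKc : ∀ k, IsCompact (K k) := fun k => (hCc k).diff Metric.isOpen_ball
    have hKcl : ∀ k, IsClosed (K k) := fun k => (hKc k).isClosed
    have hKmono : ∀ k, K (k + 1) ⊆ K k := fun k => Set.diff_subset_diff_left (hCmono k)
    obtain ⟨y, hy⟩ := IsCompact.nonempty_iInter_of_sequence_nonempty_isCompact_isClosed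
      K hKmono hKne (hKc 0) hKcl
    have hyC : y ∈ ⋂ k, C k := Set.mem_iInter.mpr fun k => (Set.mem_iInter.mp hy k).1
    rw [hx] at hyC
    have hyx : y = x := hyC
    have : y ∉ Metric.ball x (ε / 2) := (Set.mem_iInter.mp hy 0).2
    exact this (by rw [hyx]; exact Metric.mem_ball_self (by linarith))
  obtain ⟨k, hk⟩ := hball
  have hle : Metric.diam (C k) ≤ ε := by
    calc Metric.diam (C k) ≤ Metric.diam (Metric.ball x (ε / 2)) :=
          Metric.diam_mono hk Metric.isBounded_ball
      _ ≤ 2 * (ε / 2) := Metric.diam_ball (by linarith)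
      _ = ε := by ring
  exact absurd hle (not_le.mpr (hb k).2)
end
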